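/- Let x ∈ 𝔻, let τ ∈ (0,1] with S̃_Δ(x)(τ) > 0, and let x_n ∈ 𝔻 be a sequence with ‖x_n − x‖ → 0. Then Ã_τ(x_n) ≠ ∅ for all sufficiently large n, and every accumulation point of the sequence (R̃_τ(x_n)) belongs to Ã_τ(x), and every accumulation point of the sequence (L̃_τ(x_n)) belongs to Ã_τ(x). (Here α ∈ [0,1] is an accumulation point of a sequence of reals in [0,1] if some subsequence converges to α.) -/

import Mathlib

open Filter Topology Set unitInterval

noncomputable section

open scoped Classical

instance : Fact ((0:ℝ) ≤ 1) := ⟨zero_le_one⟩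

/-- The space `𝔻` of càdlàg functions on `[0,1]`: right-continuous everywhere with
finite left limits everywhere (conditions at the endpoints hold vacuously). -/
def Cadlag (x : I → ℝ) : Prop :=
  (∀ τ : I, Tendsto x (𝓝[>] τ) (𝓝 (x τ))) ∧ (∀ τ : I, ∃ l : ℝ, Tendsto x (𝓝[<] τ) (𝓝 l))

/-- The sup-norm `‖x‖ = sup_{0 ≤ τ ≤ 1} |x(τ)|`. -/
def dNorm (x : I → ℝ) : ℝ := ⨆ τ : I, |x τ|

/-- The jump `Δx(τ) = x(τ) - x(τ-)` of `x` at `τ`, with `Δx(0) := 0`. -/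
def jump (x : I → ℝ) (τ : I) : ℝ := if τ = 0 then 0 else x τ - Function.leftLim x τ

/-- The running supremum `S(x)(τ) = sup_{0 ≤ s ≤ τ} x(s)`. -/
def runSup (x : I → ℝ) (τ : I) : ℝ := sSup (x '' {s : I | s ≤ τ})

/-- The running absolute supremum `S̃(x)(τ) = sup_{0 ≤ s ≤ τ} |x(s)|`. -/
def runAbsSup (x : I → ℝ) (τ : I) : ℝ := sSup ((fun s => |x s|) '' {s : I | s ≤ τ})

/-- The largest positive jump `S_{+Δ}(x)(τ) = sup_{0 ≤ s ≤ τ} Δx(s)`. -/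
def posJumpSup (x : I → ℝ) (τ : I) : ℝ := sSup (jump x '' {s : I | s ≤ τ})

/-- The largest modulus jump `S̃_Δ(x)(τ) = sup_{0 ≤ s ≤ τ} |Δx(s)|`. -/
def modJumpSup (x : I → ℝ) (τ : I) : ℝ := sSup ((fun s => |jump x s|) '' {s : I | s ≤ τ})

/-- The first extremal positive trimming ("trim as you go") operator
`T^{(1,+)}_{rim}(x) = x - S_{+Δ}(x)`. -/
def trimPos (x : I → ℝ) : I → ℝ := fun τ => x τ - posJumpSup x τ

/-- `Λ`: continuous strictly increasing bijections of `[0,1]` fixing the endpoints. -/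
def IsTimeChange (l : I → I) : Prop := Continuous l ∧ StrictMono l ∧ l 0 = 0 ∧ l 1 = 1

/-- Convergence in the (strong) Skorokhod `J₁`-topology. -/
def J1Tendsto (xn : ℕ → I → ℝ) (x : I → ℝ) : Prop :=
  ∃ l : ℕ → I → I, (∀ n, IsTimeChange (l n)) ∧
    Tendsto (fun n => dNorm (fun τ => (l n τ : ℝ) - (τ : ℝ))) atTop (𝓝 0) ∧
    Tendsto (fun n => dNorm (fun τ => xn n (l n τ) - x τ)) atTop (𝓝 0)

/-- `Ã_τ(x)`: the times `s ∈ (0,τ]` of the largest modulus jump of `x` on `[0,τ]`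
(empty when `S̃_Δ(x)(τ) = 0`). -/
def tildeA (x : I → ℝ) (τ : I) : Set I :=
  {s : I | 0 < s ∧ s ≤ τ ∧ 0 < |jump x s| ∧ |jump x s| = modJumpSup x τ}

/-- `A⁺_τ(x)`: the times `s ∈ (0,τ]` of the largest positive jump of `x` on `[0,τ]`
(empty when `S_{+Δ}(x)(τ) = 0`). -/
def posA (x : I → ℝ) (τ : I) : Set I :=
  {s : I | 0 < s ∧ s ≤ τ ∧ 0 < jump x s ∧ jump x s = posJumpSup x τ}

/-- The signed largest-modulus ("trim as you go") trimmer `𝔗_rim`: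
`𝔗_rim(x)(τ) = x(τ) - Δx(L̃_τ(x))` if `Ã_τ(x) ≠ ∅`, `x(τ)` otherwise, where
`L̃_τ(x) = max Ã_τ(x)`. -/
def sgnModTrim (x : I → ℝ) : I → ℝ := fun τ =>
  if (tildeA x τ).Nonempty then x τ - jump x (sSup (tildeA x τ)) else x τ

/-- The record time ("lookback") trimmer:
`R_trim(x) = x - Δx(R₁(x))·1_{[R₁(x),1]}` if `A⁺₁(x) ≠ ∅`, `x` otherwise, where
`R₁(x) = min A⁺₁(x)`. -/
def recordTrim (x : I → ℝ) : I → ℝ := fun τ =>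
  if (posA x 1).Nonempty ∧ sInf (posA x 1) ≤ τ then x τ - jump x (sInf (posA x 1)) else x τ

/-- The modulus record time trimmer:
`R̃_trim(x) = x - Δx(R̃₁(x))·1_{[R̃₁(x),1]}` if `Ã₁(x) ≠ ∅`, `x` otherwise, where
`R̃₁(x) = min Ã₁(x)`. -/
def modRecordTrim (x : I → ℝ) : I → ℝ := fun τ =>
  if (tildeA x 1).Nonempty ∧ sInf (tildeA x 1) ≤ τ then x τ - jump x (sInf (tildeA x 1)) else x τ


lemma I_pos {s : I} (hs : s ≠ 0) : (0:I) < s := (nonneg').lt_of_ne' hs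

lemma nbot {s : I} (hs : s ≠ 0) : (𝓝[<] s).NeBot :=
  nhdsWithin_Iio_self_neBot' ⟨0, I_pos hs⟩

lemma tendsto_leftLim {x : I → ℝ} (hx : Cadlag x) {s : I} (hs : s ≠ 0) :
    Tendsto x (𝓝[<] s) (𝓝 (Function.leftLim x s)) := by
  obtain ⟨l, hl⟩ := hx.2 s
  rwa [leftLim_eq_of_tendsto (h := nbot hs) hl]

lemma cadlag_bounded {x : I → ℝ} (hx : Cadlag x) : ∃ M, ∀ s, |x s| ≤ M := by
  have loc : ∀ t : I, ∃ M, ∀ᶠ s in 𝓝 t, |x s| ≤ M := by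
    intro t
    obtain ⟨l, hl⟩ := hx.2 t
    refine ⟨max (|l| + 1) (|x t| + 1), ?_⟩
    rw [← nhdsLT_sup_nhdsGE t, eventually_sup]
    constructor
    · have h1 : ∀ᶠ s in 𝓝[<] t, |x s| < |l| + 1 :=
        hl.eventually ((continuous_abs.continuousAt.tendsto.eventually_lt_const
          (by linarith : |l| < |l| + 1)) : ∀ᶠ y in 𝓝 l, |y| < |l| + 1)
      exact h1.mono fun s hs => le_max_of_le_left hs.le
    · rw [← Set.Ioi_insert, nhdsWithin_insert, eventually_sup]
      constructor
      · simp only [eventually_pure]; exact le_max_of_le_right (by linarith : |x t| ≤ |x t| + 1)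
      · have h2 : ∀ᶠ s in 𝓝[>] t, |x s| < |x t| + 1 :=
          (hx.1 t).eventually (continuous_abs.continuousAt.tendsto.eventually_lt_const
            (by linarith : |x t| < |x t| + 1))
        exact h2.mono fun s hs => le_max_of_le_right hs.le
  choose M hM using loc
  obtain ⟨F, hF⟩ := isCompact_univ.elim_nhds_subcover (fun t => {s | |x s| ≤ M t})
    (fun t _ => hM t)
  have hFne : F.Nonempty := by
    have h0 := hF.2 (mem_univ (0:I))
    simp only [Set.mem_iUnion] at h0
    obtain ⟨t, ht, _⟩ := h0
    exact ⟨t, ht⟩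
  refine ⟨F.sup' hFne M, fun s => ?_⟩
  have h0 := hF.2 (mem_univ s)
  simp only [Set.mem_iUnion] at h0
  obtain ⟨t, ht, hts⟩ := h0
  exact le_trans hts (Finset.le_sup' M ht)

lemma jump_small {x : I → ℝ} (hx : Cadlag x) (t : I) {c : ℝ} (hc : 0 < c) :
    ∀ᶠ s in 𝓝[≠] t, |jump x s| < c := by
  rw [← nhdsLT_sup_nhdsGT t, eventually_sup]
  constructor
  · -- left part
    rcases eq_or_ne t 0 with rfl | ht
    · have hIio : Iio (0:I) = ∅ :=
        eq_empty_iff_forall_notMem.2 fun s hs => absurd hs (not_lt.2 nonneg')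
      rw [show (𝓝[<] (0:I)) = ⊥ by rw [← nhdsWithin_empty (0:I)]; exact congrArg _ hIio]
      exact eventually_bot
    · obtain ⟨l, hl⟩ := hx.2 t
      have h1 : ∀ᶠ s in 𝓝[<] t, |x s - l| < c/4 := by
        have : Tendsto (fun s => |x s - l|) (𝓝[<] t) (𝓝 |l - l|) :=
          ((hl.sub tendsto_const_nhds).abs)
        simp only [sub_self, abs_zero] at this
        exact this.eventually_lt_const (by linarith)
      have h1' : {s : I | |x s - l| < c/4} ∈ 𝓝[<] t := h1
      obtain ⟨u, hu, hsub⟩ := (mem_nhdsLT_iff_exists_Ioo_subset' (I_pos ht)).1 h1'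
      have hIoo : Ioo u t ∈ 𝓝[<] t := Ioo_mem_nhdsLT_of_mem ⟨hu, le_refl t⟩
      refine eventually_of_mem hIoo fun s hs => ?_
      have hs0 : s ≠ 0 := fun h => absurd (h ▸ hs.1) (not_lt.2 nonneg')
      have hxs : |x s - l| < c/4 := hsub hs
      have hL : |Function.leftLim x s - l| ≤ c/4 := by
        haveI := nbot hs0
        have htl := tendsto_leftLim hx hs0
        have hmem : Ioo u s ∈ 𝓝[<] s := Ioo_mem_nhdsLT_of_mem ⟨hs.1, le_refl s⟩
        have hev : ∀ᶠ w in 𝓝[<] s, |x w - l| ≤ c/4 :=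
          eventually_of_mem hmem fun w hw =>
            (hsub ⟨hw.1, hw.2.trans hs.2⟩).le
        exact le_of_tendsto ((htl.sub tendsto_const_nhds).abs) hev
      rw [jump, if_neg hs0]
      have : |x s - Function.leftLim x s| ≤ |x s - l| + |Function.leftLim x s - l| := by
        rw [abs_sub_comm (Function.leftLim x s) l]
        exact (abs_sub_le _ _ _)
      linarith
  · -- right part
    rcases eq_or_ne t 1 with rfl | ht
    · have hIoi : Ioi (1:I) = ∅ :=
        eq_empty_iff_forall_notMem.2 fun s hs => absurd hs (not_lt.2 le_one')
      rw [show (𝓝[>] (1:I)) = ⊥ by rw [← nhdsWithin_empty (1:I)]; exact congrArg _ hIoi]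
      exact eventually_bot
    · have ht1 : t < 1 := (le_one').lt_of_ne ht
      have h1 : ∀ᶠ s in 𝓝[>] t, |x s - x t| < c/4 := by
        have : Tendsto (fun s => |x s - x t|) (𝓝[>] t) (𝓝 |x t - x t|) :=
          (((hx.1 t).sub tendsto_const_nhds).abs)
        simp only [sub_self, abs_zero] at this
        exact this.eventually_lt_const (by linarith)
      have h1' : {s : I | |x s - x t| < c/4} ∈ 𝓝[>] t := h1
      obtain ⟨u, hu, hsub⟩ := (mem_nhdsGT_iff_exists_Ioo_subset' ht1).1 h1'
      have hIoo : Ioo t u ∈ 𝓝[>] t := Ioo_mem_nhdsGT_of_mem ⟨le_refl t, hu⟩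
      refine eventually_of_mem hIoo fun s hs => ?_
      have hs0 : s ≠ 0 := fun h => absurd (h ▸ hs.1) (not_lt.2 nonneg')
      have hxs : |x s - x t| < c/4 := hsub hs
      have hL : |Function.leftLim x s - x t| ≤ c/4 := by
        haveI := nbot hs0
        have htl := tendsto_leftLim hx hs0
        have hmem : Ioo t s ∈ 𝓝[<] s := Ioo_mem_nhdsLT_of_mem ⟨hs.1, le_refl s⟩
        have hev : ∀ᶠ w in 𝓝[<] s, |x w - x t| ≤ c/4 :=
          eventually_of_mem hmem fun w hw =>
            (hsub ⟨hw.1, hw.2.trans hs.2⟩).le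
        exact le_of_tendsto ((htl.sub tendsto_const_nhds).abs) hev
      rw [jump, if_neg hs0]
      have : |x s - Function.leftLim x s| ≤ |x s - x t| + |Function.leftLim x s - x t| := by
        rw [abs_sub_comm (Function.leftLim x s) (x t)]
        exact (abs_sub_le _ _ _)
      linarith

lemma finite_big_jumps {x : I → ℝ} (hx : Cadlag x) {c : ℝ} (hc : 0 < c) :
    {s : I | c ≤ |jump x s|}.Finite := by
  by_contra h
  have h' : {s : I | c ≤ |jump x s|}.Infinite := h
  obtain ⟨t, ht⟩ := h'.exists_accPt_principal
  rw [accPt_iff_frequently] at ht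
  have hev : ∀ᶠ s in 𝓝 t, s ∈ ({t}ᶜ : Set I) → |jump x s| < c := by
    rw [← eventually_nhdsWithin_iff]
    exact jump_small hx t hc
  obtain ⟨s, ⟨hne, hmem⟩, himp⟩ := (ht.and_eventually hev).exists
  exact absurd hmem (not_le.2 (himp hne))

lemma jump_bounded {x : I → ℝ} (hx : Cadlag x) : ∃ M, ∀ s, |jump x s| ≤ M := by
  obtain ⟨M, hM⟩ := cadlag_bounded hx
  refine ⟨2*M, fun s => ?_⟩
  have h0 : 0 ≤ M := le_trans (abs_nonneg _) (hM 0)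
  rcases eq_or_ne s 0 with rfl | hs
  · rw [jump, if_pos rfl, abs_zero]; linarith
  · haveI := nbot hs
    have hL : |Function.leftLim x s| ≤ M :=
      le_of_tendsto ((tendsto_leftLim hx hs).abs) (Eventually.of_forall fun w => hM w)
    rw [jump, if_neg hs]
    have := hM s
    calc |x s - Function.leftLim x s| ≤ |x s| + |Function.leftLim x s| := abs_sub _ _
      _ ≤ 2 * M := by linarith

lemma bddAbove_jumps {x : I → ℝ} (hx : Cadlag x) (τ : I) :
    BddAbove ((fun s => |jump x s|) '' {s : I | s ≤ τ}) := by
  obtain ⟨M, hM⟩ := jump_bounded hx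
  exact ⟨M, by rintro v ⟨s, -, rfl⟩; exact hM s⟩

lemma le_modJumpSup {x : I → ℝ} (hx : Cadlag x) {s τ : I} (hs : s ≤ τ) :
    |jump x s| ≤ modJumpSup x τ :=
  le_csSup (bddAbove_jumps hx τ) (mem_image_of_mem _ hs)

lemma exists_tildeA {x : I → ℝ} (hx : Cadlag x) {τ : I} (hS : 0 < modJumpSup x τ) :
    (tildeA x τ).Nonempty := by
  set S := modJumpSup x τ with hSdef
  have hne : ((fun s => |jump x s|) '' {s : I | s ≤ τ}).Nonempty :=
    ⟨_, mem_image_of_mem _ (le_refl τ)⟩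
  obtain ⟨v, hv, hv2⟩ := exists_lt_of_lt_csSup hne (by linarith : S/2 < S)
  obtain ⟨s1, hs1, rfl⟩ := hv
  set F := {s : I | s ≤ τ ∧ S/2 ≤ |jump x s|} with hFdef
  have hFfin : F.Finite := (finite_big_jumps hx (by linarith : (0:ℝ) < S/2)).subset
    (fun s hs => hs.2)
  have hFne : F.Nonempty := ⟨s1, hs1, hv2.le⟩
  obtain ⟨s0, hs0F, hs0v⟩ := (hFne.image (fun s => |jump x s|)).csSup_mem
    (hFfin.image (fun s => |jump x s|))
  have hmax : ∀ s ∈ F, |jump x s| ≤ |jump x s0| := by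
    intro s hs
    simp only at hs0v
    rw [hs0v]
    exact le_csSup (hFfin.image _).bddAbove (mem_image_of_mem _ hs)
  have hub : |jump x s0| ≤ S := le_modJumpSup hx hs0F.1
  have hlb : S ≤ |jump x s0| := by
    have hmle : S ≤ max (|jump x s0|) (S/2) := by
      apply csSup_le hne
      rintro v ⟨s, hs, rfl⟩
      by_cases hc : S/2 ≤ |jump x s|
      · exact le_max_of_le_left (hmax s ⟨hs, hc⟩)
      · exact le_max_of_le_right (not_le.1 hc).le
    rcases le_max_iff.1 hmle with h | h
    · exact h
    · linarith
  have heq : |jump x s0| = S := le_antisymm hub hlb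
  have hs00 : s0 ≠ 0 := by
    intro h
    rw [h] at heq
    rw [jump, if_pos rfl, abs_zero] at heq
    linarith
  exact ⟨s0, I_pos hs00, hs0F.1, by rw [heq]; exact hS, heq⟩

lemma tildeA_finite {x : I → ℝ} (hx : Cadlag x) (τ : I) : (tildeA x τ).Finite := by
  rcases Set.eq_empty_or_nonempty (tildeA x τ) with h | h
  · rw [h]; exact finite_empty
  · obtain ⟨s, hs⟩ := h
    have hSpos : 0 < modJumpSup x τ := hs.2.2.2 ▸ hs.2.2.1
    exact (finite_big_jumps hx hSpos).subset fun w hw => by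
      simp only [mem_setOf_eq]; rw [← hw.2.2.2]

lemma le_dNorm {f : I → ℝ} (hb : ∃ M, ∀ s, |f s| ≤ M) (s : I) : |f s| ≤ dNorm f := by
  obtain ⟨M, hM⟩ := hb
  exact le_ciSup ⟨M, by rintro v ⟨w, rfl⟩; exact hM w⟩ s

lemma sub_bounded {x y : I → ℝ} (hx : Cadlag x) (hy : Cadlag y) :
    ∃ M, ∀ w, |y w - x w| ≤ M := by
  obtain ⟨M1, h1⟩ := cadlag_bounded hx
  obtain ⟨M2, h2⟩ := cadlag_bounded hy
  exact ⟨M2 + M1, fun w => (abs_sub _ _).trans (add_le_add (h2 w) (h1 w))⟩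

lemma jump_sub_le {x y : I → ℝ} (hx : Cadlag x) (hy : Cadlag y) (s : I) :
    |jump y s - jump x s| ≤ 2 * dNorm (fun w => y w - x w) := by
  have hε := le_dNorm (sub_bounded hx hy)
  have hε0 : 0 ≤ dNorm (fun w => y w - x w) := (abs_nonneg _).trans (hε 0)
  rcases eq_or_ne s 0 with rfl | hs
  · rw [jump, if_pos rfl, jump, if_pos rfl, sub_zero, abs_zero]; linarith
  · haveI := nbot hs
    have hL : |Function.leftLim y s - Function.leftLim x s| ≤ dNorm (fun w => y w - x w) :=
      le_of_tendsto (((tendsto_leftLim hy hs).sub (tendsto_leftLim hx hs)).abs)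
        (Eventually.of_forall hε)
    rw [jump, if_neg hs, jump, if_neg hs]
    have heq : (y s - Function.leftLim y s) - (x s - Function.leftLim x s)
        = (y s - x s) - (Function.leftLim y s - Function.leftLim x s) := by ring
    rw [heq]
    have := hε s
    calc |(y s - x s) - (Function.leftLim y s - Function.leftLim x s)|
        ≤ |y s - x s| + |Function.leftLim y s - Function.leftLim x s| := abs_sub _ _
      _ ≤ 2 * dNorm (fun w => y w - x w) := by linarith

lemma modJumpSup_le_add {x y : I → ℝ} (hx : Cadlag x) (hy : Cadlag y) (τ : I) :
    modJumpSup y τ ≤ modJumpSup x τ + 2 * dNorm (fun w => y w - x w) := by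
  rw [modJumpSup]
  apply csSup_le ⟨_, mem_image_of_mem (fun s => |jump y s|) (show τ ∈ {s : I | s ≤ τ} from le_refl τ)⟩
  rintro v ⟨s, hs, rfl⟩
  have h1 := jump_sub_le hx hy s
  have h2 := le_modJumpSup hx (hs : s ≤ τ)
  have h3 : |jump y s| - |jump x s| ≤ |jump y s - jump x s| :=
    (abs_sub_abs_le_abs_sub _ _)
  simp only
  linarith

lemma dNorm_symm (x y : I → ℝ) :
    dNorm (fun w => x w - y w) = dNorm (fun w => y w - x w) := by
  unfold dNorm
  congr 1
  funext w
  rw [abs_sub_comm]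

lemma accum_main {x : I → ℝ} (hx : Cadlag x) {τ : I} (hS : 0 < modJumpSup x τ)
    (yn : ℕ → I → ℝ) (hyn : ∀ k, Cadlag (yn k))
    (hconv : Tendsto (fun k => dNorm (fun s => yn k s - x s)) atTop (𝓝 0))
    (α : I) (r : ℕ → I) (hr : ∀ᶠ k in atTop, r k ∈ tildeA (yn k) τ)
    (hlim : Tendsto r atTop (𝓝 α)) : α ∈ tildeA x τ := by
  set S := modJumpSup x τ with hSdef
  set ε : ℕ → ℝ := fun k => dNorm (fun s => yn k s - x s) with hεdef
  have key : ∀ k, r k ∈ tildeA (yn k) τ → S - 4 * ε k ≤ |jump x (r k)| := by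
    intro k hk
    have h1 : |jump (yn k) (r k) - jump x (r k)| ≤ 2 * ε k := jump_sub_le hx (hyn k) (r k)
    have h2 : S ≤ modJumpSup (yn k) τ + 2 * ε k := by
      have h := modJumpSup_le_add (hyn k) hx τ
      rw [dNorm_symm x (yn k)] at h
      exact h
    have h3 : |jump (yn k) (r k)| = modJumpSup (yn k) τ := hk.2.2.2
    have h4 : |jump (yn k) (r k)| - |jump x (r k)| ≤ |jump (yn k) (r k) - jump x (r k)| :=
      abs_sub_abs_le_abs_sub _ _
    linarith
  have hsmall : ∀ᶠ s in 𝓝 α, s ∈ ({α}ᶜ : Set I) → |jump x s| < S/2 := by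
    rw [← eventually_nhdsWithin_iff]
    exact jump_small hx α (by linarith : (0:ℝ) < S/2)
  have h4 : ∀ᶠ k in atTop, r k ∈ ({α}ᶜ : Set I) → |jump x (r k)| < S/2 :=
    hlim.eventually hsmall
  have h5 : ∀ᶠ k in atTop, ε k < S/8 := hconv.eventually_lt_const (by linarith)
  have heq : ∀ᶠ k in atTop, r k = α := by
    filter_upwards [hr, h4, h5] with k hk h4k h5k
    by_contra hne
    have hkey := key k hk
    have hgt : S/2 < |jump x (r k)| := by linarith
    exact absurd (h4k (Set.mem_compl_singleton_iff.2 hne)) (not_lt.2 hgt.le)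
  have hα_mem : ∀ᶠ k in atTop, α ∈ tildeA (yn k) τ := by
    filter_upwards [hr, heq] with k h1 h2
    rwa [h2] at h1
  obtain ⟨k0, hk0⟩ := hα_mem.exists
  have hlow : ∀ᶠ k in atTop, S - 4 * ε k ≤ |jump x α| := by
    filter_upwards [hr, heq] with k h1 h2
    have := key k h1
    rwa [h2] at this
  have hlim2 : Tendsto (fun k => S - 4 * ε k) atTop (𝓝 S) := by
    have := tendsto_const_nhds (α := ℕ) (f := atTop) (x := S) |>.sub (hconv.const_mul 4)
    simpa using this
  have hge : S ≤ |jump x α| := le_of_tendsto hlim2 hlow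
  have hle : |jump x α| ≤ S := le_modJumpSup hx hk0.2.1
  exact ⟨hk0.1, hk0.2.1, lt_of_lt_of_le hS hge, le_antisymm hle hge⟩

/-- if `‖x_n - x‖ → 0` and `S̃_Δ(x)(τ) > 0`, then `Ã_τ(x_n) ≠ ∅`
eventually, and every accumulation point of `(R̃_τ(x_n))` and of `(L̃_τ(x_n))`
belongs to `Ã_τ(x)`. -/
theorem stmt14 (x : I → ℝ) (hx : Cadlag x) (τ : I) (hτ : τ ≠ 0)
    (hS : 0 < modJumpSup x τ)
    (xn : ℕ → I → ℝ) (hxn : ∀ n, Cadlag (xn n))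
    (hconv : Tendsto (fun n => dNorm (fun s => xn n s - x s)) atTop (𝓝 0)) :
    (∀ᶠ n in atTop, (tildeA (xn n) τ).Nonempty) ∧
    (∀ (α : I) (φ : ℕ → ℕ), StrictMono φ →
      Tendsto (fun k => sInf (tildeA (xn (φ k)) τ)) atTop (𝓝 α) → α ∈ tildeA x τ) ∧
    (∀ (α : I) (φ : ℕ → ℕ), StrictMono φ →
      Tendsto (fun k => sSup (tildeA (xn (φ k)) τ)) atTop (𝓝 α) → α ∈ tildeA x τ) := by
  have hev1 : ∀ᶠ n in atTop, (tildeA (xn n) τ).Nonempty := by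
    have h5 : ∀ᶠ n in atTop, dNorm (fun s => xn n s - x s) < modJumpSup x τ / 4 :=
      hconv.eventually_lt_const (by linarith)
    filter_upwards [h5] with n h5n
    have h := modJumpSup_le_add (hxn n) hx τ
    rw [dNorm_symm x (xn n)] at h
    exact exists_tildeA (hxn n) (by linarith)
  refine ⟨hev1, ?_, ?_⟩
  · intro α φ hφ hlim
    refine accum_main hx hS (fun k => xn (φ k)) (fun k => hxn (φ k))
      (hconv.comp hφ.tendsto_atTop) α _ ?_ hlim
    filter_upwards [hφ.tendsto_atTop.eventually hev1] with k hk
    exact hk.csInf_mem (tildeA_finite (hxn (φ k)) τ)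
  · intro α φ hφ hlim
    refine accum_main hx hS (fun k => xn (φ k)) (fun k => hxn (φ k))
      (hconv.comp hφ.tendsto_atTop) α _ ?_ hlim
    filter_upwards [hφ.tendsto_atTop.eventually hev1] with k hk
    exact hk.csSup_mem (tildeA_finite (hxn (φ k)) τ)


end
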